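/- Let D = 1, A ≥ 2, and n be a positive integer with binary length λ+1. There exists a representation N* of n over {-1,0,1} of length at most λ+2 that is in non-adjacent form except possibly at the least significant nonzero digit, and T(N*, λ+1) ≤ (λ/2 + 1)·A + 1. -/
import Mathlib

noncomputable def T (D A : ℝ) (d : ℕ → ℤ) : ℕ → ℝ
  | 0 => if d 0 = 0 then 0 else (((d 0).natAbs : ℝ) - 1) * A
  | i + 1 =>
      if d (i + 1) = 0 then T D A d i
      else if ∀ j < i + 1, d j = 0 then
        ((i : ℝ) + 1) * D + (((d (i + 1)).natAbs : ℝ) - 1) * A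
      else max (T D A d i) (((i : ℝ) + 1) * D) + ((d (i + 1)).natAbs : ℝ) * A

noncomputable def delta (A : ℝ) (d : ℕ → ℤ) : ℕ → ℝ
  | 0 => 0
  | i + 1 =>
      if d (i + 1) = 0 then delta A d i - 1
      else if ∀ j < i + 1, d j = 0 then 0
      else max (delta A d i + (A - 1)) A

def val (d : ℕ → ℤ) (lam : ℕ) : ℤ := ∑ i ∈ Finset.range (lam + 1), d i * 2 ^ i

def dig (m : ℤ) : ℤ := if m % 2 = 0 then 0 else if m % 4 = 1 then 1 else -1

def rem (n : ℤ) : ℕ → ℤ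
  | 0 => n
  | i + 1 => (rem n i - dig (rem n i)) / 2

lemma dig_cases (m : ℤ) : dig m = -1 ∨ dig m = 0 ∨ dig m = 1 := by
  unfold dig; split_ifs <;> simp

lemma dig_spec (m : ℤ) :
    (m % 2 = 0 ∧ dig m = 0) ∨ (m % 4 = 1 ∧ dig m = 1) ∨ (m % 4 = 3 ∧ dig m = -1) := by
  unfold dig; split_ifs with h1 h2
  · exact Or.inl ⟨h1, rfl⟩
  · exact Or.inr (Or.inl ⟨h2, rfl⟩)
  · exact Or.inr (Or.inr ⟨by omega, rfl⟩)

lemma rem_succ_eq (n : ℤ) (i : ℕ) : 2 * rem n (i + 1) = rem n i - dig (rem n i) := by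
  have h : 2 ∣ (rem n i - dig (rem n i)) := by
    rcases dig_spec (rem n i) with ⟨h1, h2⟩ | ⟨h1, h2⟩ | ⟨h1, h2⟩ <;> omega
  show 2 * ((rem n i - dig (rem n i)) / 2) = _
  omega

lemma rem_nonneg (n : ℤ) (hn : 0 ≤ n) : ∀ i, 0 ≤ rem n i := by
  intro i
  induction i with
  | zero => exact hn
  | succ i ih =>
    have h := rem_succ_eq n i
    rcases dig_cases (rem n i) with h1 | h1 | h1 <;> omega

lemma rem_le (n : ℤ) (hn : 0 ≤ n) : ∀ i, rem n i * 2 ^ i ≤ n + 2 ^ i - 1 := by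
  intro i
  induction i with
  | zero => simp [rem]
  | succ i ih =>
    have h := rem_succ_eq n i
    have key : 2 * rem n (i + 1) ≤ rem n i + 1 := by
      rcases dig_cases (rem n i) with h1 | h1 | h1 <;> omega
    have hp : (0 : ℤ) ≤ 2 ^ i := by positivity
    calc rem n (i + 1) * 2 ^ (i + 1) = (2 * rem n (i + 1)) * 2 ^ i := by ring
      _ ≤ (rem n i + 1) * 2 ^ i := mul_le_mul_of_nonneg_right key hp
      _ = rem n i * 2 ^ i + 2 ^ i := by ring
      _ ≤ n + 2 ^ i - 1 + 2 ^ i := by linarith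
      _ = n + 2 ^ (i + 1) - 1 := by ring

lemma rem_sum (n : ℤ) : ∀ i, (∑ j ∈ Finset.range i, dig (rem n j) * 2 ^ j) + rem n i * 2 ^ i = n := by
  intro i
  induction i with
  | zero => simp [rem]
  | succ i ih =>
    rw [Finset.sum_range_succ]
    linear_combination ih + (2 : ℤ) ^ i * rem_succ_eq n i

lemma naf (n : ℤ) (i : ℕ) (h : dig (rem n i) ≠ 0) : dig (rem n (i + 1)) = 0 := by
  have h1 := rem_succ_eq n i
  rcases dig_spec (rem n i) with ⟨h2, h3⟩ | ⟨h2, h3⟩ | ⟨h2, h3⟩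
  · exact absurd h3 h
  all_goals
    rcases dig_spec (rem n (i + 1)) with ⟨_, h5⟩ | ⟨h4, _⟩ | ⟨h4, _⟩
  · exact h5
  · omega
  · omega
  · exact h5
  · omega
  · omega

lemma T_le_delta (A : ℝ) (hA : 2 ≤ A) (d : ℕ → ℤ) (hd : ∀ i, (d i).natAbs ≤ 1) :
    ∀ i, T 1 A d i ≤ (i : ℝ) + delta A d i := by
  intro i
  induction i with
  | zero =>
    simp only [T, delta]
    split_ifs with h
    · simp
    · have h1 : (d 0).natAbs = 1 := by have := hd 0; omega
      simp [h1]
  | succ i ih =>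
    simp only [T, delta]
    split_ifs with h1 h2
    · push_cast; linarith
    · have h3 : (d (i + 1)).natAbs = 1 := by have := hd (i + 1); omega
      rw [h3]; push_cast; ring_nf; linarith
    · have h3 : (d (i + 1)).natAbs = 1 := by have := hd (i + 1); omega
      rw [h3]
      have l1 : T 1 A d i + 1 * A ≤ ((i : ℝ) + 1) + max (delta A d i + (A - 1)) A := by
        have := le_max_left (delta A d i + (A - 1)) A
        push_cast at ih ⊢; linarith
      have l2 : ((i : ℝ) + 1) * 1 + 1 * A ≤ ((i : ℝ) + 1) + max (delta A d i + (A - 1)) A := by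
        have := le_max_right (delta A d i + (A - 1)) A
        linarith
      push_cast
      have : max (T 1 A d i) (((i : ℝ) + 1) * 1) + 1 * A
          ≤ ((i : ℝ) + 1) + max (delta A d i + (A - 1)) A := by
        rcases max_cases (T 1 A d i) (((i : ℝ) + 1) * 1) with ⟨he, _⟩ | ⟨he, _⟩ <;>
          rw [he] <;> linarith
      linarith [this]

lemma delta_le (A : ℝ) (hA : 2 ≤ A) (d : ℕ → ℤ) (hNAF : ∀ i, d i ≠ 0 → d (i + 1) = 0) :
    ∀ i, (d i ≠ 0 → delta A d i ≤ (i : ℝ) / 2 * (A - 2) + 2) ∧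
         (d i = 0 → delta A d i ≤ max (((i : ℝ) - 1) / 2 * (A - 2) + 1) 0) := by
  intro i
  induction i with
  | zero =>
    constructor
    · intro _; simp only [delta]; norm_num
    · intro _; simp only [delta]; exact le_max_right _ _
  | succ i ih =>
    obtain ⟨ih1, ih2⟩ := ih
    have hA2 : (0 : ℝ) ≤ A - 2 := by linarith
    constructor
    · intro hne
      simp only [delta]
      rw [if_neg hne]
      split_ifs with hall
      · have : (0 : ℝ) ≤ ((i : ℝ) + 1) / 2 * (A - 2) := by positivity
        push_cast; linarith
      · have hdi : d i = 0 := by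
          by_contra h; exact hne (hNAF i h)
        have hb := ih2 hdi
        push_neg at hall
        obtain ⟨j, hj, hdj⟩ := hall
        have hi1 : 1 ≤ i := by
          rcases Nat.eq_zero_or_pos i with h0 | h0
          · subst h0
            have : j = 0 := by omega
            subst this
            exact absurd hdi hdj
          · exact h0
        have hi1' : (1 : ℝ) ≤ (i : ℝ) := by exact_mod_cast hi1
        apply max_le
        · rcases max_cases (((i : ℝ) - 1) / 2 * (A - 2) + 1) (0 : ℝ) with ⟨he, _⟩ | ⟨he, _⟩ <;>
            rw [he] at hb <;> push_cast <;> nlinarith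
        · push_cast; nlinarith
    · intro hz
      simp only [delta]
      rw [if_pos hz]
      rcases eq_or_ne (d i) 0 with hdi | hdi
      · have hb := ih2 hdi
        rcases max_cases (((i : ℝ) - 1) / 2 * (A - 2) + 1) (0 : ℝ) with ⟨he, _⟩ | ⟨he, _⟩ <;>
          rw [he] at hb
        · apply le_max_of_le_left
          push_cast; nlinarith
        · apply le_max_of_le_right
          linarith
      · have hb := ih1 hdi
        apply le_max_of_le_left
        push_cast; linarith

/-- For D = 1, A ≥ 2, and n of binary length λ+1, there is a
{-1,0,1}-representation of n of length at most λ+2, in NAF except possibly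
at the least significant nonzero digit, with
T(N*, λ+1) ≤ (λ/2 + 1)A + 1. -/
theorem stmt11 (A : ℝ) (hA : 2 ≤ A) (lam n : ℕ)
    (hn : 2 ^ lam ≤ n) (hn2 : n < 2 ^ (lam + 1)) :
    ∃ d : ℕ → ℤ,
      (∀ i, d i = -1 ∨ d i = 0 ∨ d i = 1) ∧
      (∀ i, lam + 1 < i → d i = 0) ∧
      val d (lam + 1) = (n : ℤ) ∧
      (∀ i, d i ≠ 0 → d (i + 1) ≠ 0 → ∀ j < i, d j = 0) ∧
      T 1 A d (lam + 1) ≤ ((lam : ℝ) / 2 + 1) * A + 1 := by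
  set d : ℕ → ℤ := fun i => dig (rem (n : ℤ) i) with hd_def
  have hn0 : (0 : ℤ) ≤ (n : ℤ) := Int.natCast_nonneg n
  have hn2' : (n : ℤ) ≤ 2 ^ (lam + 1) - 1 := by
    have : (n : ℤ) < 2 ^ (lam + 1) := by exact_mod_cast hn2
    omega
  -- rem at lam is at most 2
  have hr2 : rem (n : ℤ) lam ≤ 2 := by
    by_contra h
    push_neg at h
    have hp : (0 : ℤ) < 2 ^ lam := by positivity
    have h3 : (3 : ℤ) ≤ rem (n : ℤ) lam := h
    have := mul_le_mul_of_nonneg_right h3 hp.le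
    have hb := rem_le (n : ℤ) hn0 lam
    have hps : (2 : ℤ) ^ (lam + 1) = 2 * 2 ^ lam := by ring
    linarith
  have hr0 : 0 ≤ rem (n : ℤ) lam := rem_nonneg (n : ℤ) hn0 lam
  have hz2 : rem (n : ℤ) (lam + 2) = 0 := by
    have e1 := rem_succ_eq (n : ℤ) lam
    have e2 : 2 * rem (n : ℤ) (lam + 2) = rem (n : ℤ) (lam + 1) - dig (rem (n : ℤ) (lam + 1)) :=
      rem_succ_eq (n : ℤ) (lam + 1)
    rcases dig_spec (rem (n : ℤ) lam) with ⟨u1, u2⟩ | ⟨u1, u2⟩ | ⟨u1, u2⟩ <;>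
      rcases dig_spec (rem (n : ℤ) (lam + 1)) with ⟨v1, v2⟩ | ⟨v1, v2⟩ | ⟨v1, v2⟩ <;>
      omega
  have hzk : ∀ k, rem (n : ℤ) (lam + 2 + k) = 0 := by
    intro k
    induction k with
    | zero => exact hz2
    | succ k ih =>
      have e : 2 * rem (n : ℤ) (lam + 2 + (k + 1)) =
          rem (n : ℤ) (lam + 2 + k) - dig (rem (n : ℤ) (lam + 2 + k)) :=
        rem_succ_eq (n : ℤ) (lam + 2 + k)
      rcases dig_spec (rem (n : ℤ) (lam + 2 + k)) with ⟨u1, u2⟩ | ⟨u1, u2⟩ | ⟨u1, u2⟩ <;>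
        omega
  have hNAF : ∀ i, d i ≠ 0 → d (i + 1) = 0 := fun i h => naf (n : ℤ) i h
  refine ⟨d, fun i => dig_cases _, ?_, ?_, ?_, ?_⟩
  · intro i hi
    have : rem (n : ℤ) i = 0 := by
      have := hzk (i - (lam + 2))
      have heq : lam + 2 + (i - (lam + 2)) = i := by omega
      rwa [heq] at this
    show dig (rem (n : ℤ) i) = 0
    rw [this]
    decide
  · show (∑ i ∈ Finset.range (lam + 1 + 1), dig (rem (n : ℤ) i) * 2 ^ i) = (n : ℤ)
    have := rem_sum (n : ℤ) (lam + 2)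
    rw [hz2] at this
    simpa using this
  · intro i hi hi1 j hj
    exact absurd (hNAF i hi) hi1
  · have habs : ∀ i, (d i).natAbs ≤ 1 := by
      intro i
      rcases dig_cases (rem (n : ℤ) i) with h | h | h <;>
        simp [hd_def, h]
    have hT := T_le_delta A hA d habs (lam + 1)
    have hδ := delta_le A hA d hNAF (lam + 1)
    obtain ⟨hδ1, hδ2⟩ := hδ
    rcases eq_or_ne (d (lam + 1)) 0 with h0 | h0
    · have hb := hδ2 h0
      have hl0 : (0 : ℝ) ≤ (lam : ℝ) := Nat.cast_nonneg _
      rcases max_cases ((((lam + 1 : ℕ) : ℝ) - 1) / 2 * (A - 2) + 1) (0 : ℝ) with ⟨he, _⟩ | ⟨he, _⟩ <;>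
        rw [he] at hb <;> push_cast at hb hT ⊢ <;> nlinarith
    · have hb := hδ1 h0
      have hl0 : (0 : ℝ) ≤ (lam : ℝ) := Nat.cast_nonneg _
      push_cast at hb hT ⊢
      nlinarith
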